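/- The dressing action formula (ρ(x,y,z,w))(p,q,r,s) = (eʷp - e^{-λr+w}η_λ(r)y, e⁻ʷq + e^{-λr-w}η_λ(r)x, r, s - e^{-λr}p·x + e^{-λr}q·y + e^{-2λr}η_λ(r)β(x,y)) defines a right action of the extended Heisenberg group H̃ on the set G̃ = ℝⁿ×ℝⁿ×ℝ×ℝ: ρ(h'h) = ρ(h)∘ρ(h') and ρ(e) = id. -/

import Mathlib

noncomputable section

/-- The standard inner product on `ℝⁿ`. -/
def beta {n : ℕ} (x y : Fin n → ℝ) : ℝ := ∑ i, x i * y i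

/-- `η_λ(r) = (e^{2λr}-1)/(2λ)`. -/
def eta (l r : ℝ) : ℝ := (Real.exp (2 * l * r) - 1) / (2 * l)

/-- The extended Heisenberg group multiplication on `H̃ = ℝⁿ × ℝⁿ × ℝ × ℝ`:
`(x,y,z,w)(x',y',z',w') = (x+eʷx', y+e⁻ʷy', z+z'+e⁻ʷβ(x,y'), w+w')`. -/
def Htmul {n : ℕ} (a b : (Fin n → ℝ) × (Fin n → ℝ) × ℝ × ℝ) :
    (Fin n → ℝ) × (Fin n → ℝ) × ℝ × ℝ :=
  (a.1 + Real.exp a.2.2.2 • b.1,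
   a.2.1 + Real.exp (-a.2.2.2) • b.2.1,
   a.2.2.1 + b.2.2.1 + Real.exp (-a.2.2.2) * beta a.1 b.2.1,
   a.2.2.2 + b.2.2.2)

/-- The dressing action formula of `H̃` on `G̃ = ℝⁿ×ℝⁿ×ℝ×ℝ`. -/
def rhoHtGt {n : ℕ} (l : ℝ) (h : (Fin n → ℝ) × (Fin n → ℝ) × ℝ × ℝ)
    (g : (Fin n → ℝ) × (Fin n → ℝ) × ℝ × ℝ) :
    (Fin n → ℝ) × (Fin n → ℝ) × ℝ × ℝ :=
  (Real.exp h.2.2.2 • g.1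
      - (Real.exp (-(l * g.2.2.1) + h.2.2.2) * eta l g.2.2.1) • h.2.1,
   Real.exp (-h.2.2.2) • g.2.1
      + (Real.exp (-(l * g.2.2.1) - h.2.2.2) * eta l g.2.2.1) • h.1,
   g.2.2.1,
   g.2.2.2 - Real.exp (-(l * g.2.2.1)) * beta g.1 h.1
     + Real.exp (-(l * g.2.2.1)) * beta g.2.1 h.2.1
     + Real.exp (-(2 * (l * g.2.2.1))) * eta l g.2.2.1 * beta h.1 h.2.1)

lemma beta_add_left {n : ℕ} (x y z : Fin n → ℝ) :
    beta (x + y) z = beta x z + beta y z := by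
  simp [beta, add_mul, Finset.sum_add_distrib]

lemma beta_add_right {n : ℕ} (x y z : Fin n → ℝ) :
    beta x (y + z) = beta x y + beta x z := by
  simp [beta, mul_add, Finset.sum_add_distrib]

lemma beta_sub_left {n : ℕ} (x y z : Fin n → ℝ) :
    beta (x - y) z = beta x z - beta y z := by
  simp [beta, sub_mul, Finset.sum_sub_distrib]

lemma beta_smul_left {n : ℕ} (c : ℝ) (x z : Fin n → ℝ) :
    beta (c • x) z = c * beta x z := by
  simp [beta, Finset.mul_sum, mul_assoc]

lemma beta_smul_right {n : ℕ} (c : ℝ) (x z : Fin n → ℝ) :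
    beta x (c • z) = c * beta x z := by
  unfold beta; rw [Finset.mul_sum]; exact Finset.sum_congr rfl fun i _ => by simp [smul_eq_mul]; ring

/-- The dressing action formula defines a right action of the extended
Heisenberg group `H̃` on the set `G̃`: `ρ(h'h) = ρ(h)∘ρ(h')` and `ρ(e) = id`. -/
theorem stmt_11 {n : ℕ} (l : ℝ) (hl : l ≠ 0) :
    (∀ h h' g : (Fin n → ℝ) × (Fin n → ℝ) × ℝ × ℝ,
        rhoHtGt l (Htmul h' h) g = rhoHtGt l h (rhoHtGt l h' g)) ∧
    (∀ g : (Fin n → ℝ) × (Fin n → ℝ) × ℝ × ℝ,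
        rhoHtGt l ((0 : Fin n → ℝ), (0 : Fin n → ℝ), (0 : ℝ), (0 : ℝ)) g = g) := by
  have h2l : (2 : ℝ) * l ≠ 0 := by positivity
  constructor
  · rintro ⟨x, y, z, w⟩ ⟨x', y', z', w'⟩ ⟨p, q, r, s⟩
    have hE : Real.exp (2 * l * r) = 2 * l * eta l r + 1 := by
      rw [eta]; field_simp; ring
    simp only [rhoHtGt, Htmul, Prod.mk.injEq]
    refine ⟨?_, ?_, ?_⟩
    · funext i
      simp only [Pi.add_apply, Pi.sub_apply, Pi.smul_apply, smul_eq_mul,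
        Real.exp_add, Real.exp_sub, Real.exp_neg]
      field_simp
      ring
    · funext i
      simp only [Pi.add_apply, Pi.sub_apply, Pi.smul_apply, smul_eq_mul,
        Real.exp_add, Real.exp_sub, Real.exp_neg, neg_add]
      field_simp
      ring
    · have hc : beta y' x = beta x y' := by
        unfold beta; exact Finset.sum_congr rfl fun i _ => mul_comm _ _
      have hsq : Real.exp (2 * l * r) = Real.exp (l * r) * Real.exp (l * r) := by
        rw [mul_assoc, two_mul, Real.exp_add]
      have hsq' : Real.exp (2 * (l * r)) = Real.exp (l * r) * Real.exp (l * r) := by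
        rw [two_mul, Real.exp_add]
      simp only [beta_add_left, beta_add_right, beta_sub_left, beta_smul_left,
        beta_smul_right, Real.exp_add, Real.exp_sub, Real.exp_neg, neg_add,
        eta, hsq, hsq', hc]
      field_simp
      exact ⟨trivial, by ring⟩
  · rintro ⟨p, q, r, s⟩
    simp [rhoHtGt, beta]
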